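/- Let F and x be smooth functions on an open interval I ⊆ ℝ, and for k ≥ 1 define b_k(a) = ∑_{s=1}^{k} F^{(k-s)}(a)/(k-s)! · x^{(s)}(a)/(1/2)_s. Then b₁ = 2 F x′, and for every k ≥ 1 one has b_k′ = (k + 1/2) b_{k+1} − (F^{(k)}/k!) x′ on I. -/

import Mathlib

open Polynomial

/-- The Pochhammer symbol `(1/2)_s`. -/
noncomputable def poch (s : ℕ) : ℝ := (ascPochhammer ℝ s).eval (1/2 : ℝ)

/-- The coefficient `b_k(a) = ∑_{s=1}^{k} F^{(k-s)}(a)/(k-s)! · x^{(s)}(a)/(1/2)_s`,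
with derivatives taken within the set `I`. -/
noncomputable def bfun (I : Set ℝ) (F x : ℝ → ℝ) (k : ℕ) (a : ℝ) : ℝ :=
  ∑ s ∈ Finset.Icc 1 k,
    iteratedDerivWithin (k - s) F I a / (Nat.factorial (k - s) : ℝ) *
      (iteratedDerivWithin s x I a / poch s)

lemma poch_zero : poch 0 = 1 := by simp [poch]

lemma poch_succ (s : ℕ) : poch (s + 1) = poch s * (1/2 + s) := by
  simp [poch, ascPochhammer_succ_right]

lemma poch_pos (s : ℕ) : 0 < poch s := by
  induction s with
  | zero => simp [poch_zero]
  | succ n ih =>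
      rw [poch_succ]
      have : (0:ℝ) < 1/2 + n := by positivity
      positivity

lemma poch_one : poch 1 = 1/2 := by
  rw [show poch 1 = poch (0 + 1) from rfl, poch_succ, poch_zero]; norm_num

lemma itDW_eq {I : Set ℝ} (hI : IsOpen I) (n : ℕ) (f : ℝ → ℝ) {y : ℝ} (hy : y ∈ I) :
    iteratedDerivWithin n f I y = iteratedDeriv n f y := by
  simp only [iteratedDerivWithin, iteratedDeriv, iteratedFDerivWithin_of_isOpen n hI hy]

lemma hasDerivAt_iteratedDeriv {I : Set ℝ} (hI : IsOpen I) {f : ℝ → ℝ}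
    (hf : ContDiffOn ℝ (⊤ : ℕ∞) f I) (m : ℕ) {a : ℝ} (ha : a ∈ I) :
    HasDerivAt (iteratedDeriv m f) (iteratedDeriv (m + 1) f a) a := by
  have h1 : DifferentiableWithinAt ℝ (iteratedDerivWithin m f I) I a :=
    hf.differentiableOn_iteratedDerivWithin (by exact_mod_cast WithTop.coe_lt_top m)
      hI.uniqueDiffOn a ha
  have hEv : iteratedDerivWithin m f I =ᶠ[nhds a] iteratedDeriv m f :=
    Filter.eventuallyEq_of_mem (hI.mem_nhds ha) fun y hy => itDW_eq hI m f hy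
  have hd : DifferentiableAt ℝ (iteratedDeriv m f) a :=
    (h1.differentiableAt (hI.mem_nhds ha)).congr_of_eventuallyEq hEv.symm
  rw [iteratedDeriv_succ]
  exact hd.hasDerivAt

/-- The key combinatorial/algebraic identity. -/
lemma key_sum (k : ℕ) (hk : 1 ≤ k) (A X : ℕ → ℝ) :
    ∑ s ∈ Finset.Icc 1 k,
      (A (k - s + 1) / (Nat.factorial (k - s) : ℝ) * (X s / poch s)
        + A (k - s) / (Nat.factorial (k - s) : ℝ) * (X (s + 1) / poch s))
    = ((k : ℝ) + 1/2) *
        ∑ s ∈ Finset.Icc 1 (k + 1),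
          A (k + 1 - s) / (Nat.factorial (k + 1 - s) : ℝ) * (X s / poch s)
      - A k / (Nat.factorial k : ℝ) * X 1 := by
  set g : ℕ → ℝ := fun s => A (k + 1 - s) / (Nat.factorial (k + 1 - s) : ℝ) * (X s / poch s)
    with hg
  set h : ℕ → ℝ := fun s => ((s : ℝ) - 1/2) * g s with hh
  have hu : ∀ s ∈ Finset.Icc 1 k,
      A (k - s + 1) / (Nat.factorial (k - s) : ℝ) * (X s / poch s)
        = ((k : ℝ) + 1 - s) * g s := by
    intro s hs
    simp only [Finset.mem_Icc] at hs
    have h1 : k - s + 1 = k + 1 - s := by omega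
    have h2 : Nat.factorial (k + 1 - s) = (k + 1 - s) * Nat.factorial (k - s) := by
      rw [show k + 1 - s = (k - s) + 1 by omega, Nat.factorial_succ]
    have h3 : ((k + 1 - s : ℕ) : ℝ) = (k : ℝ) + 1 - s := by
      rw [Nat.cast_sub (by omega : s ≤ k + 1)]; push_cast; ring
    have hpos : (0 : ℝ) < ((k + 1 - s : ℕ) : ℝ) := by
      exact_mod_cast Nat.lt_of_lt_of_le Nat.zero_lt_one (by omega : 1 ≤ k + 1 - s)
    have hfac : (Nat.factorial (k - s) : ℝ) ≠ 0 := by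
      exact_mod_cast (Nat.factorial_pos _).ne'
    rw [hg]
    simp only
    rw [h1, h2, ← h3]
    push_cast
    field_simp
  have hv : ∀ s ∈ Finset.Icc 1 k,
      A (k - s) / (Nat.factorial (k - s) : ℝ) * (X (s + 1) / poch s) = h (s + 1) := by
    intro s hs
    simp only [Finset.mem_Icc] at hs
    have h1 : k + 1 - (s + 1) = k - s := by omega
    have hps : poch s ≠ 0 := (poch_pos s).ne'
    have hps2 : (1/2 : ℝ) + s ≠ 0 := by positivity
    rw [hh, hg]
    simp only [h1, poch_succ]
    push_cast
    field_simp
    ring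
  rw [Finset.sum_add_distrib, Finset.sum_congr rfl hu, Finset.sum_congr rfl hv]
  -- extend the first sum to `Icc 1 (k+1)`
  have e1 : ∑ s ∈ Finset.Icc 1 (k + 1), ((k : ℝ) + 1 - s) * g s
      = ∑ s ∈ Finset.Icc 1 k, ((k : ℝ) + 1 - s) * g s := by
    rw [Finset.sum_Icc_succ_top (by omega : 1 ≤ k + 1)]
    have : ((k : ℝ) + 1 - (k + 1 : ℕ)) = 0 := by push_cast; ring
    rw [this, zero_mul, add_zero]
  -- reindex the second sum
  have e2 : ∑ s ∈ Finset.Icc 1 k, h (s + 1) = ∑ s ∈ Finset.Icc 2 (k + 1), h s := by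
    have := Finset.map_add_right_Icc 1 k 1
    rw [← this, Finset.sum_map]
    rfl
  have e3 : Finset.Icc 1 (k + 1) = insert 1 (Finset.Icc 2 (k + 1)) := by
    ext t
    simp only [Finset.mem_Icc, Finset.mem_insert]
    omega
  have e4 : ∑ s ∈ Finset.Icc 2 (k + 1), h s
      = ∑ s ∈ Finset.Icc 1 (k + 1), h s - h 1 := by
    rw [e3, Finset.sum_insert (by simp)]
    ring
  rw [e2, e4, ← e1]
  have e5 : ∑ s ∈ Finset.Icc 1 (k + 1), ((k : ℝ) + 1 - s) * g s
      + ∑ s ∈ Finset.Icc 1 (k + 1), h s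
      = ((k : ℝ) + 1/2) * ∑ s ∈ Finset.Icc 1 (k + 1), g s := by
    rw [Finset.mul_sum, ← Finset.sum_add_distrib]
    refine Finset.sum_congr rfl fun s _ => ?_
    rw [hh]
    ring
  have e6 : h 1 = A k / (Nat.factorial k : ℝ) * X 1 := by
    rw [hh, hg]
    simp only [Nat.add_sub_cancel, Nat.cast_one, poch_one]
    norm_num
    ring
  rw [← e6, ← e5]
  ring

/-- For smooth `F`, `x` on an open interval `I`: `b₁ = 2 F x′`, and for every
`k ≥ 1`, `b_k′ = (k + 1/2) b_{k+1} − (F^{(k)}/k!) x′` on `I`. -/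
theorem stmt4 (I : Set ℝ) (hIopen : IsOpen I) (hIconn : I.OrdConnected)
    (F x : ℝ → ℝ) (hF : ContDiffOn ℝ (⊤ : ℕ∞) F I) (hx : ContDiffOn ℝ (⊤ : ℕ∞) x I) :
    (∀ a ∈ I, bfun I F x 1 a = 2 * F a * derivWithin x I a) ∧
    (∀ k : ℕ, 1 ≤ k → ∀ a ∈ I,
      derivWithin (bfun I F x k) I a =
        ((k : ℝ) + 1/2) * bfun I F x (k + 1) a -
          iteratedDerivWithin k F I a / (Nat.factorial k : ℝ) * derivWithin x I a) := by
  constructor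
  · intro a ha
    have hu : UniqueDiffWithinAt ℝ I a := hIopen.uniqueDiffWithinAt ha
    simp only [bfun, Finset.Icc_self, Finset.sum_singleton, Nat.sub_self,
      iteratedDerivWithin_zero, Nat.factorial_zero, iteratedDerivWithin_one, poch_one,
      Nat.cast_one]
    field_simp
  · intro k hk a ha
    -- the "global" version of bfun k
    set g : ℝ → ℝ := fun y => ∑ s ∈ Finset.Icc 1 k,
      iteratedDeriv (k - s) F y / (Nat.factorial (k - s) : ℝ) *
        (iteratedDeriv s x y / poch s) with hgdef
    set D : ℝ := ∑ s ∈ Finset.Icc 1 k,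
      (iteratedDeriv (k - s + 1) F a / (Nat.factorial (k - s) : ℝ) *
          (iteratedDeriv s x a / poch s)
        + iteratedDeriv (k - s) F a / (Nat.factorial (k - s) : ℝ) *
          (iteratedDeriv (s + 1) x a / poch s)) with hDdef
    have hgD : HasDerivAt g D a := by
      rw [hgdef, hDdef]
      refine HasDerivAt.fun_sum fun s _ => ?_
      have hF' := (hasDerivAt_iteratedDeriv hIopen hF (k - s) ha).div_const
        ((Nat.factorial (k - s) : ℝ))
      have hx' := (hasDerivAt_iteratedDeriv hIopen hx s ha).div_const (poch s)
      simpa [div_mul_eq_mul_div, mul_comm, mul_div_assoc] using hF'.fun_mul hx'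
    have hEv : bfun I F x k =ᶠ[nhds a] g := by
      refine Filter.eventuallyEq_of_mem (hIopen.mem_nhds ha) fun y hy => ?_
      simp only [bfun, hgdef]
      exact Finset.sum_congr rfl fun s _ => by
        rw [itDW_eq hIopen _ F hy, itDW_eq hIopen _ x hy]
    have hbD : HasDerivAt (bfun I F x k) D a := hgD.congr_of_eventuallyEq hEv
    have hderiv : derivWithin (bfun I F x k) I a = D :=
      hbD.hasDerivWithinAt.derivWithin (hIopen.uniqueDiffWithinAt ha)
    rw [hderiv]
    have hb1 : bfun I F x (k + 1) a = ∑ s ∈ Finset.Icc 1 (k + 1),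
        iteratedDeriv (k + 1 - s) F a / (Nat.factorial (k + 1 - s) : ℝ) *
          (iteratedDeriv s x a / poch s) :=
      Finset.sum_congr rfl fun s _ => by
        rw [itDW_eq hIopen _ F ha, itDW_eq hIopen _ x ha]
    have hd1 : derivWithin x I a = iteratedDeriv 1 x a := by
      rw [derivWithin_of_isOpen hIopen ha, iteratedDeriv_one]
    have hFk : iteratedDerivWithin k F I a = iteratedDeriv k F a := itDW_eq hIopen _ F ha
    rw [hb1, hd1, hFk, hDdef]
    exact key_sum k hk (fun m => iteratedDeriv m F a) (fun s => iteratedDeriv s x a)
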